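/- There is no C∞-special Frenet curve which is a Bertrand curve in the semi-Euclidean space E^{n+1}_ν with n ≥ 3. Precisely: fix n ≥ 3 and 0 ≤ ν ≤ n+1, and let C (data c, e₁, …, e_{n+1}, k₁, …, kₙ, signs ε₁, …, ε_{n+1}) and C̄ (data c̄, ē₁, …, ē_{n+1}, k̄₁, …, k̄ₙ, signs ε̄₁, …, ε̄_{n+1}) be C∞-special Frenet curves in E^{n+1}_ν. Let φ : ℝ → ℝ be smooth with φ'(s) ≠ 0 for all s and α : ℝ → ℝ smooth such that c̄(φ(s)) = c(s) + α(s)·e₂(s) and ē₂(φ(s)) is a scalar multiple of e₂(s) for all s. Then α(s) = 0 for all s, hence c̄(φ(s)) = c(s) for all s. -/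

import Mathlib

noncomputable section

/-- The indefinite metric of the semi-Euclidean space `E^{n+1}_ν`:
`g(v,w) = -∑_{i=1}^{ν} vᵢwᵢ + ∑_{i=ν+1}^{n+1} vᵢwᵢ` (indices `0`-based here). -/
def gnu (n ν : ℕ) (v w : Fin (n + 1) → ℝ) : ℝ :=
  ∑ i : Fin (n + 1), (if (i : ℕ) < ν then (-1 : ℝ) else 1) * v i * w i

/-- A `C^∞`-special Frenet curve in `E^{n+1}_ν`: a smooth curve with Frenet frame
`e₀ = c', e₁, …, eₙ` (`0`-based; the paper's `e₁, …, e_{n+1}`), signs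
`εᵢ = g(eᵢ,eᵢ) ∈ {±1}`, and nowhere-vanishing curvatures `k₀, …, k_{n-1}` (the paper's
`k₁, …, kₙ`) satisfying the Frenet equations `e₀' = ε₁·k₀·e₁`,
`eᵢ' = -εᵢ₋₁·kᵢ₋₁·eᵢ₋₁ + εᵢ₊₁·kᵢ·eᵢ₊₁` for `1 ≤ i ≤ n-1`, and
`eₙ' = -εₙ₋₁·kₙ₋₁·eₙ₋₁`. -/
structure FrenetSemiEuclidean (n ν : ℕ) where
  c : ℝ → Fin (n + 1) → ℝ
  e : ℕ → ℝ → Fin (n + 1) → ℝ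
  eps : ℕ → ℝ
  k : ℕ → ℝ → ℝ
  smooth_c : ContDiff ℝ (⊤ : ℕ∞) c
  smooth_e : ∀ i, i ≤ n → ContDiff ℝ (⊤ : ℕ∞) (e i)
  smooth_k : ∀ i, i < n → ContDiff ℝ (⊤ : ℕ∞) (k i)
  eps_pm : ∀ i, i ≤ n → eps i = 1 ∨ eps i = -1
  deriv_c : ∀ s, HasDerivAt c (e 0 s) s
  orth : ∀ i j, i ≤ n → j ≤ n → i ≠ j → ∀ s, gnu n ν (e i s) (e j s) = 0
  unit : ∀ i, i ≤ n → ∀ s, gnu n ν (e i s) (e i s) = eps i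
  k_ne : ∀ i, i < n → ∀ s, k i s ≠ 0
  frenet_first : ∀ s, HasDerivAt (e 0) ((eps 1 * k 0 s) • e 1 s) s
  frenet_mid : ∀ i, 1 ≤ i → i < n → ∀ s,
    HasDerivAt (e i)
      ((-(eps (i - 1) * k (i - 1) s)) • e (i - 1) s + (eps (i + 1) * k i s) • e (i + 1) s) s
  frenet_last : ∀ s, HasDerivAt (e n) ((-(eps (n - 1) * k (n - 1) s)) • e (n - 1) s) s

lemma gnu_add_left (n ν : ℕ) (x y w : Fin (n + 1) → ℝ) :
    gnu n ν (x + y) w = gnu n ν x w + gnu n ν y w := by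
  simp only [gnu, ← Finset.sum_add_distrib]
  apply Finset.sum_congr rfl
  intro i _
  simp only [Pi.add_apply]
  ring

lemma gnu_smul_left (n ν : ℕ) (a : ℝ) (x w : Fin (n + 1) → ℝ) :
    gnu n ν (a • x) w = a * gnu n ν x w := by
  simp only [gnu, Finset.mul_sum]
  apply Finset.sum_congr rfl
  intro i _
  simp only [Pi.smul_apply, smul_eq_mul]
  ring

lemma gnu_add_right (n ν : ℕ) (x y w : Fin (n + 1) → ℝ) :
    gnu n ν w (x + y) = gnu n ν w x + gnu n ν w y := by
  simp only [gnu, ← Finset.sum_add_distrib]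
  apply Finset.sum_congr rfl
  intro i _
  simp only [Pi.add_apply]
  ring

lemma gnu_smul_right (n ν : ℕ) (a : ℝ) (x w : Fin (n + 1) → ℝ) :
    gnu n ν w (a • x) = a * gnu n ν w x := by
  simp only [gnu, Finset.mul_sum]
  apply Finset.sum_congr rfl
  intro i _
  simp only [Pi.smul_apply, smul_eq_mul]
  ring

lemma gnu_zero_right (n ν : ℕ) (w : Fin (n + 1) → ℝ) : gnu n ν w 0 = 0 := by
  simp [gnu]

lemma hasDerivAt_gnu {n ν : ℕ} {v w : ℝ → Fin (n + 1) → ℝ} {v' w' : Fin (n + 1) → ℝ} {s : ℝ}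
    (hv : HasDerivAt v v' s) (hw : HasDerivAt w w' s) :
    HasDerivAt (fun t => gnu n ν (v t) (w t)) (gnu n ν v' (w s) + gnu n ν (v s) w') s := by
  have hvi : ∀ i, HasDerivAt (fun t => v t i) (v' i) s := fun i => hasDerivAt_pi.mp hv i
  have hwi : ∀ i, HasDerivAt (fun t => w t i) (w' i) s := fun i => hasDerivAt_pi.mp hw i
  have key : HasDerivAt
      (fun t => ∑ i : Fin (n + 1), (if (i : ℕ) < ν then (-1 : ℝ) else 1) * v t i * w t i)
      (∑ i : Fin (n + 1), ((if (i : ℕ) < ν then (-1 : ℝ) else 1) * v' i * w s i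
        + (if (i : ℕ) < ν then (-1 : ℝ) else 1) * v s i * w' i)) s := by
    apply HasDerivAt.fun_sum
    intro i _
    exact ((hvi i).const_mul (if (i : ℕ) < ν then (-1 : ℝ) else 1)).mul (hwi i)
  simpa [gnu, Finset.sum_add_distrib] using key

/-- There is no `C^∞`-special Frenet curve which is a Bertrand curve in `E^{n+1}_ν` for
`n ≥ 3`: if `c̄(φ(s)) = c(s) + α(s)·e₂(s)` (here `e 1` is the paper's principal normal
`e₂`) with `ē₂(φ(s))` a scalar multiple of `e₂(s)` for all `s`, then `α ≡ 0` and hence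
`c̄(φ(s)) = c(s)` for all `s`. -/
theorem no_bertrand_semiEuclidean
    (n ν : ℕ) (hn : 3 ≤ n) (hν : ν ≤ n + 1)
    (C Cb : FrenetSemiEuclidean n ν) (φ α : ℝ → ℝ)
    (hφ : ContDiff ℝ (⊤ : ℕ∞) φ) (hφ' : ∀ s, deriv φ s ≠ 0)
    (hα : ContDiff ℝ (⊤ : ℕ∞) α)
    (hpos : ∀ s, Cb.c (φ s) = C.c s + α s • C.e 1 s)
    (hnor : ∀ s, ∃ lam : ℝ, Cb.e 1 (φ s) = lam • C.e 1 s) :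
    (∀ s, α s = 0) ∧ (∀ s, Cb.c (φ s) = C.c s) := by
  have hφd : ∀ s, HasDerivAt φ (deriv φ s) s := fun s =>
    ((hφ.differentiable (by simp)) s).hasDerivAt
  have hαd : ∀ s, HasDerivAt α (deriv α s) s := fun s =>
    ((hα.differentiable (by simp)) s).hasDerivAt
  -- the fundamental relation obtained by differentiating the position relation
  have hstar : ∀ s, deriv φ s • Cb.e 0 (φ s)
      = C.e 0 s + (α s • ((-(C.eps 0 * C.k 0 s)) • C.e 0 s + (C.eps 2 * C.k 1 s) • C.e 2 s)
          + deriv α s • C.e 1 s) := by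
    intro s
    have h1 : HasDerivAt (fun t => Cb.c (φ t)) (deriv φ s • Cb.e 0 (φ s)) s :=
      (Cb.deriv_c (φ s)).scomp s (hφd s)
    have he1 : HasDerivAt (C.e 1)
        ((-(C.eps 0 * C.k 0 s)) • C.e 0 s + (C.eps 2 * C.k 1 s) • C.e 2 s) s := by
      simpa using C.frenet_mid 1 le_rfl (by omega) s
    have h2 : HasDerivAt (fun t => C.c t + α t • C.e 1 t)
        (C.e 0 s + (α s • ((-(C.eps 0 * C.k 0 s)) • C.e 0 s + (C.eps 2 * C.k 1 s) • C.e 2 s)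
          + deriv α s • C.e 1 s)) s :=
      (C.deriv_c s).add ((hαd s).smul he1)
    have heq : (fun t => Cb.c (φ t)) = fun t => C.c t + α t • C.e 1 t := funext hpos
    rw [heq] at h1
    exact h1.unique h2
  -- the tangent of the second curve is orthogonal to e_j for j ≥ 3
  have hF : ∀ j, 2 < j → j ≤ n → ∀ s, gnu n ν (Cb.e 0 (φ s)) (C.e j s) = 0 := by
    intro j hj2 hjn s
    have h0 := C.orth 0 j (by omega) hjn (by omega) s
    have h1 := C.orth 1 j (by omega) hjn (by omega) s
    have h2 := C.orth 2 j (by omega) hjn (by omega) s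
    have h := congrArg (fun v => gnu n ν v (C.e j s)) (hstar s)
    simp only [gnu_add_left, gnu_smul_left, h0, h1, h2, mul_zero, add_zero, zero_add,
      smul_eq_mul] at h
    rcases mul_eq_zero.mp h with h' | h'
    · exact absurd h' (hφ' s)
    · exact h'
  -- the inner product with e 2
  have hG2 : ∀ s, deriv φ s * gnu n ν (Cb.e 0 (φ s)) (C.e 2 s) = α s * C.k 1 s := by
    intro s
    have h0 := C.orth 0 2 (by omega) (by omega) (by omega) s
    have h1 := C.orth 1 2 (by omega) (by omega) (by omega) s
    have h2 := C.unit 2 (by omega) s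
    have h := congrArg (fun v => gnu n ν v (C.e 2 s)) (hstar s)
    simp only [gnu_add_left, gnu_smul_left, h0, h1, h2, mul_zero, add_zero, zero_add,
      smul_eq_mul] at h
    rw [h]
    rcases C.eps_pm 2 (by omega) with he | he <;> rw [he] <;> ring
  -- main step: α ≡ 0
  have hmain : ∀ s, α s = 0 := by
    intro s
    -- derivative of t ↦ e₀bar(φ t)
    have hE0 : HasDerivAt (fun t => Cb.e 0 (φ t))
        (deriv φ s • ((Cb.eps 1 * Cb.k 0 (φ s)) • Cb.e 1 (φ s))) s :=
      (Cb.frenet_first (φ s)).scomp s (hφd s)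
    -- derivative of e 3, with remainder orthogonal to e₀bar(φ s)
    have hE3 : ∃ w3 : Fin (n + 1) → ℝ,
        HasDerivAt (C.e 3) ((-(C.eps 2 * C.k 2 s)) • C.e 2 s + w3) s ∧
        gnu n ν (Cb.e 0 (φ s)) w3 = 0 := by
      rcases eq_or_lt_of_le hn with h3 | h3
      · refine ⟨0, ?_, gnu_zero_right n ν _⟩
        subst h3
        simpa using C.frenet_last s
      · refine ⟨(C.eps 4 * C.k 3 s) • C.e 4 s, ?_, ?_⟩
        · simpa using C.frenet_mid 3 (by omega) h3 s
        · rw [gnu_smul_right, hF 4 (by omega) (by omega) s, mul_zero]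
    obtain ⟨w3, hE3, hw3⟩ := hE3
    have hD : HasDerivAt (fun t => gnu n ν (Cb.e 0 (φ t)) (C.e 3 t))
        (gnu n ν (deriv φ s • ((Cb.eps 1 * Cb.k 0 (φ s)) • Cb.e 1 (φ s))) (C.e 3 s)
          + gnu n ν (Cb.e 0 (φ s)) ((-(C.eps 2 * C.k 2 s)) • C.e 2 s + w3)) s :=
      hasDerivAt_gnu hE0 hE3
    have hFconst : (fun t => gnu n ν (Cb.e 0 (φ t)) (C.e 3 t)) = fun _ => (0 : ℝ) :=
      funext (hF 3 (by omega) (by omega))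
    rw [hFconst] at hD
    have hzero := hD.unique (hasDerivAt_const s 0)
    -- first summand vanishes since ē₂(φ s) ∥ e₂(s) ⟂ e₄(s)
    obtain ⟨lam, hlam⟩ := hnor s
    rw [hlam] at hzero
    rw [gnu_smul_left, gnu_smul_left, gnu_smul_left, C.orth 1 3 (by omega) (by omega)
      (by omega) s, gnu_add_right, gnu_smul_right, hw3] at hzero
    -- hzero now says -(eps2 * k2) * gnu(ē₀(φ s), e₂ s) = 0
    have hk2 : C.k 2 s ≠ 0 := C.k_ne 2 (by omega) s
    have heps2 : C.eps 2 ≠ 0 := by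
      rcases C.eps_pm 2 (by omega) with h | h <;> rw [h] <;> norm_num
    have hg2 : gnu n ν (Cb.e 0 (φ s)) (C.e 2 s) = 0 := by
      have h' : -(C.eps 2 * C.k 2 s) * gnu n ν (Cb.e 0 (φ s)) (C.e 2 s) = 0 := by
        linarith [hzero]
      rcases mul_eq_zero.mp h' with h'' | h''
      · exact absurd h'' (by simp [heps2, hk2])
      · exact h''
    have := hG2 s
    rw [hg2, mul_zero] at this
    have hk1 : C.k 1 s ≠ 0 := C.k_ne 1 (by omega) s
    rcases mul_eq_zero.mp this.symm with h | h
    · exact h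
    · exact absurd h hk1
  refine ⟨hmain, fun s => ?_⟩
  rw [hpos s, hmain s, zero_smul, add_zero]
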